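/- (Douglas majorization–factorization) For bounded operators S, T on a Hilbert space and λ > 0, one has S S* ≤ λ² T T* if and only if there exists a bounded operator Q with T Q = S; moreover Q can be chosen with ‖Q‖ ≤ λ. -/

import Mathlib

noncomputable section

variable {H : Type*} [NormedAddCommGroup H] [InnerProductSpace ℂ H] [CompleteSpace H]

open ContinuousLinearMap in
lemma douglas_adj_re (A : H →L[ℂ] H) (x : H) :
    Complex.re (inner ℂ ((A * adjoint A) x) x : ℂ) = ‖adjoint A x‖ ^ 2 := by
  have h1 : (A * adjoint A) x = A (adjoint A x) := rfl
  have h2 := adjoint_inner_right A (adjoint A x) x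
  rw [h1, ← h2]
  exact inner_self_eq_norm_sq (𝕜 := ℂ) _

open ContinuousLinearMap in
lemma douglas_re_diff (S T : H →L[ℂ] H) (l : ℝ) (x : H) :
    Complex.re (inner ℂ ((l ^ 2 • (T * adjoint T) - S * adjoint S) x) x : ℂ)
      = l ^ 2 * ‖adjoint T x‖ ^ 2 - ‖adjoint S x‖ ^ 2 := by
  have hx : (l ^ 2 • (T * adjoint T) - S * adjoint S) x
      = l ^ 2 • ((T * adjoint T) x) - (S * adjoint S) x := rfl
  have hs : (l ^ 2 : ℝ) • ((T * adjoint T) x) = ((l ^ 2 : ℝ) : ℂ) • ((T * adjoint T) x) :=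
    RCLike.real_smul_eq_coe_smul (K := ℂ) _ _
  rw [hx, hs, inner_sub_left, inner_smul_left, Complex.sub_re, Complex.conj_ofReal]
  rw [Complex.re_ofReal_mul, douglas_adj_re, douglas_adj_re]

open ContinuousLinearMap in
lemma douglas_selfadjoint (S T : H →L[ℂ] H) (l : ℝ) :
    IsSelfAdjoint (l ^ 2 • (T * adjoint T) - S * adjoint S) := by
  have hsT : IsSelfAdjoint (T * adjoint T) := by
    rw [mul_def, isSelfAdjoint_iff', adjoint_comp, adjoint_adjoint]
  have hsS : IsSelfAdjoint (S * adjoint S) := by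
    rw [mul_def, isSelfAdjoint_iff', adjoint_comp, adjoint_adjoint]
  have hsT2 : IsSelfAdjoint (l ^ 2 • (T * adjoint T)) := IsSelfAdjoint.smul (star_trivial _) hsT
  exact hsT2.sub hsS

set_option maxHeartbeats 1000000

open ContinuousLinearMap in
/-- Douglas's majorization and factorization theorem. -/
theorem douglas (S T : H →L[ℂ] H) (l : ℝ) (hl : 0 < l) :
    S * adjoint S ≤ (l ^ 2) • (T * adjoint T) ↔
      ∃ Q : H →L[ℂ] H, ‖Q‖ ≤ l ∧ T * Q = S := by
  constructor
  · intro h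
    have hpt : ∀ x : H, ‖adjoint S x‖ ≤ l * ‖adjoint T x‖ := by
      intro x
      have h0 := ((le_def _ _).mp h).2 x
      rw [reApplyInnerSelf_apply] at h0
      have h0' : (0:ℝ) ≤ Complex.re (inner ℂ ((l ^ 2 • (T * adjoint T) - S * adjoint S) x) x : ℂ) := h0
      rw [douglas_re_diff] at h0'
      clear h0
      nlinarith [norm_nonneg (adjoint S x), norm_nonneg (adjoint T x), hl.le, h0', mul_nonneg hl.le (norm_nonneg (adjoint T x))]
    have hkey : ∀ x y : H, adjoint T x = adjoint T y → adjoint S x = adjoint S y := by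
      intro x y hxy
      have h1 := hpt (x - y)
      rw [map_sub, map_sub, hxy, sub_self, norm_zero, mul_zero] at h1
      have h2 : adjoint S x - adjoint S y = 0 := norm_le_zero_iff.mp h1
      exact sub_eq_zero.mp h2
    set K₀ : Submodule ℂ H := LinearMap.range (adjoint T : H →ₗ[ℂ] H) with hK₀def
    have hmem : ∀ u : K₀, adjoint T ((u.2).choose) = (u : H) := fun u => u.2.choose_spec
    let g₀ : K₀ →ₗ[ℂ] H :=
      { toFun := fun u => adjoint S ((u.2).choose)
        map_add' := by
          intro u v
          show adjoint S ((u + v).2.choose) = adjoint S u.2.choose + adjoint S v.2.choose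
          have h3 : adjoint S ((u + v).2.choose) = adjoint S (u.2.choose + v.2.choose) := by
            apply hkey
            rw [hmem, map_add, hmem, hmem]
            rfl
          rw [h3, map_add]
        map_smul' := by
          intro c u
          show adjoint S ((c • u).2.choose) = (RingHom.id ℂ) c • adjoint S u.2.choose
          have h3 : adjoint S ((c • u).2.choose) = adjoint S (c • u.2.choose) := by
            apply hkey
            rw [hmem, map_smul, hmem]
            rfl
          rw [h3, map_smul]
          rfl }
    have hg₀ : ∀ u : K₀, ‖g₀ u‖ ≤ l * ‖u‖ := by
      intro u
      have h4 := hpt (u.2.choose)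
      rw [hmem] at h4
      exact h4
    let g : K₀ →L[ℂ] H := LinearMap.mkContinuous g₀ l hg₀
    set K : Submodule ℂ H := K₀.topologicalClosure with hKdef
    haveI : CompleteSpace K := K₀.isClosed_topologicalClosure.completeSpace_coe
    let e₀ : K₀ →ₗ[ℂ] K := Submodule.inclusion K₀.le_topologicalClosure
    have he₀norm : ∀ u : K₀, ‖e₀ u‖ = ‖u‖ := fun u => rfl
    let e : K₀ →L[ℂ] K := LinearMap.mkContinuous e₀ 1
      (fun u => by rw [he₀norm, one_mul])
    have h_unif : IsUniformInducing e :=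
      (AddMonoidHomClass.isometry_of_norm e (fun u => he₀norm u)).isUniformInducing
    have h_dense : DenseRange e := by
      intro y
      have himg : ((↑) '' Set.range e : Set H) = (K₀ : Set H) := by
        ext z
        constructor
        · rintro ⟨w, ⟨u, rfl⟩, rfl⟩
          exact u.2
        · intro hz
          exact ⟨e ⟨z, hz⟩, ⟨⟨z, hz⟩, rfl⟩, rfl⟩
      rw [closure_subtype, himg]
      rw [← Submodule.topologicalClosure_coe]
      exact y.2
    let ext : K →L[ℂ] H := g.extend e
    let P : H →L[ℂ] K := K.orthogonalProjectionOnto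
    let R : H →L[ℂ] H := ext.comp P
    have hR : ∀ x : H, R (adjoint T x) = adjoint S x := by
      intro x
      have hmemK0 : adjoint T x ∈ K₀ := ⟨x, rfl⟩
      have hmemK : adjoint T x ∈ K := K₀.le_topologicalClosure hmemK0
      have hp : P (adjoint T x) = ⟨adjoint T x, hmemK⟩ := by
        apply Subtype.ext
        exact Submodule.starProjection_eq_self_iff.mpr hmemK
      have he : e ⟨adjoint T x, hmemK0⟩ = ⟨adjoint T x, hmemK⟩ := rfl
      have h5 : R (adjoint T x) = ext (P (adjoint T x)) := rfl
      rw [h5, hp, ← he, extend_eq g h_dense h_unif]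
      exact hkey _ _ (hmem ⟨adjoint T x, hmemK0⟩)
    have hgnorm : ‖g‖ ≤ l := LinearMap.mkContinuous_norm_le g₀ hl.le hg₀
    have hext : ‖ext‖ ≤ l := by
      have h6 := opNorm_extend_le g h_dense (N := 1)
        (fun u => by rw [NNReal.coe_one, one_mul]; exact le_of_eq (he₀norm u).symm)
      calc ‖ext‖ ≤ (1 : NNReal) * ‖g‖ := h6
        _ ≤ l := by rw [NNReal.coe_one, one_mul]; exact hgnorm
    have hRnorm : ‖R‖ ≤ l := by
      calc ‖R‖ ≤ ‖ext‖ * ‖P‖ := opNorm_comp_le _ _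
        _ ≤ l * 1 := by
            exact mul_le_mul hext (Submodule.orthogonalProjectionOnto_norm_le K) (norm_nonneg P) hl.le
        _ = l := mul_one l
    refine ⟨adjoint R, ?_, ?_⟩
    · calc ‖adjoint R‖ = ‖R‖ := by
            exact (ContinuousLinearMap.adjoint : (H →L[ℂ] H) ≃ₗᵢ⋆[ℂ] _).norm_map R
        _ ≤ l := hRnorm
    · have h7 : R ∘L adjoint T = adjoint S := ContinuousLinearMap.ext hR
      have h8 := congrArg ContinuousLinearMap.adjoint h7
      rw [adjoint_comp, adjoint_adjoint, adjoint_adjoint] at h8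
      exact h8
  · rintro ⟨Q, hQ, hTQ⟩
    rw [le_def]
    constructor
    · exact IsSelfAdjoint.isSymmetric (douglas_selfadjoint S T l)
    · intro x
      rw [reApplyInnerSelf_apply]
      show (0:ℝ) ≤ Complex.re (inner ℂ ((l ^ 2 • (T * adjoint T) - S * adjoint S) x) x : ℂ)
      rw [douglas_re_diff]
      have h9 : adjoint S = adjoint Q ∘L adjoint T := by
        rw [← hTQ]; exact adjoint_comp T Q
      have h10 : ‖adjoint S x‖ ≤ l * ‖adjoint T x‖ := by
        rw [h9]
        show ‖adjoint Q (adjoint T x)‖ ≤ l * ‖adjoint T x‖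
        calc ‖adjoint Q (adjoint T x)‖ ≤ ‖adjoint Q‖ * ‖adjoint T x‖ := le_opNorm _ _
          _ ≤ l * ‖adjoint T x‖ := by
              apply mul_le_mul_of_nonneg_right _ (norm_nonneg _)
              calc ‖adjoint Q‖ = ‖Q‖ :=
                    (ContinuousLinearMap.adjoint : (H →L[ℂ] H) ≃ₗᵢ⋆[ℂ] _).norm_map Q
                _ ≤ l := hQ
      nlinarith [norm_nonneg (adjoint S x), norm_nonneg (adjoint T x)]
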